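/- arXiv:2004.04770 — 4 statements merged into one kernel-verified Lean document; each statement's English description precedes it below -/
import Mathlib

section
/- Let m ≥ 1 and let A : ℝ → Matrix (Fin (2m)) (Fin (2m)) ℝ be a family of symmetric matrices each of whose entries is differentiable at a point θ₀. Then the function θ ↦ Haf(A(θ)) is differentiable at θ₀ and its derivative equals (1/2) · Σ_{i ≠ j} (A'(θ₀))_{ij} · Haf(A(θ₀)_{−i−j}), where the sum runs over all ordered pairs of distinct indices i, j ∈ {1,…,2m} and A'(θ₀) is the entrywise derivative of A at θ₀. -/
set_option maxHeartbeats 1000000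


open Finset Matrix

open scoped Classical in
/-- The hafnian of a matrix: the sum over all perfect matchings of the index set
(encoded as fixed-point-free involutions `σ`), of the product of the entries
`A i (σ i)` over the pairs `{i, σ i}` (each pair taken once, via `i < σ i`).
For an empty index type this is `1`, and for an odd-cardinality index type it is `0`. -/
noncomputable def hafnian {ι : Type*} [Fintype ι] [LinearOrder ι] {R : Type*} [CommRing R]
    (A : Matrix ι ι R) : R :=
  ∑ σ ∈ Finset.univ.filter
      (fun σ : Equiv.Perm ι => σ * σ = 1 ∧ ∀ i, σ i ≠ i),
    ∏ i ∈ Finset.univ.filter (fun i => i < σ i), A i (σ i)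

/-- `A_{−i−j}`: the matrix obtained from `A` by deleting rows `i, j` and columns `i, j`. -/
def delTwo {ι : Type*} {R : Type*} (A : Matrix ι ι R) (i j : ι) :
    Matrix {k : ι // k ≠ i ∧ k ≠ j} {k : ι // k ≠ i ∧ k ≠ j} R :=
  A.submatrix Subtype.val Subtype.val

open scoped Classical in
theorem hafnian_reindex {ι κ : Type*} [Fintype ι] [LinearOrder ι] [Fintype κ] [LinearOrder κ]
    (e : ι ≃o κ) (A : Matrix κ κ ℝ) :
    hafnian (A.submatrix e e) = hafnian A := by
  unfold hafnian
  refine Finset.sum_nbij' (fun σ => e.toEquiv.permCongr σ)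
    (fun σ' => e.toEquiv.permCongr.symm σ') ?_ ?_ ?_ ?_ ?_
  · intro σ hσ
    simp only [Finset.mem_filter, Finset.mem_univ, true_and] at hσ ⊢
    obtain ⟨h1, h2⟩ := hσ
    have h1' : ∀ x, σ (σ x) = x := fun x => by
      have := Equiv.ext_iff.mp h1 x; simpa [Equiv.Perm.mul_apply] using this
    constructor
    · ext x
      simp [Equiv.Perm.mul_apply, Equiv.permCongr_apply, h1']
    · intro x
      simp only [Equiv.permCongr_apply]
      intro hx
      exact h2 _ (by simpa using congrArg e.toEquiv.symm hx)
  · intro σ' hσ'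
    simp only [Finset.mem_filter, Finset.mem_univ, true_and] at hσ' ⊢
    obtain ⟨h1, h2⟩ := hσ'
    have h1' : ∀ x, σ' (σ' x) = x := fun x => by
      have := Equiv.ext_iff.mp h1 x; simpa [Equiv.Perm.mul_apply] using this
    constructor
    · ext x
      simp [Equiv.Perm.mul_apply, Equiv.permCongr_symm_apply, h1']
    · intro x
      simp only [Equiv.permCongr_symm_apply]
      intro hx
      exact h2 _ (by simpa using congrArg e.toEquiv hx)
  · intro σ _; ext x; simp
  · intro σ' _; ext x; simp
  · intro σ _
    refine Finset.prod_nbij' (fun x => e x) (fun y => e.symm y) ?_ ?_ ?_ ?_ ?_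
    · intro x hx
      simp only [Finset.mem_filter, Finset.mem_univ, true_and] at hx ⊢
      simpa [Equiv.permCongr_apply] using e.strictMono hx
    · intro y hy
      simp only [Finset.mem_filter, Finset.mem_univ, true_and] at hy ⊢
      simp only [Equiv.permCongr_apply] at hy
      have := e.symm.strictMono hy
      simpa using this
    · intro x _; simp
    · intro y _; simp
    · intro x _
      simp [Matrix.submatrix_apply, Equiv.permCongr_apply]

open scoped Classical in
theorem key_sum {ι : Type*} [Fintype ι] [LinearOrder ι] (A₀ : Matrix ι ι ℝ) {i j : ι}
    (hij : i < j) :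
    ∑ σ ∈ (Finset.univ.filter
        (fun σ : Equiv.Perm ι => σ * σ = 1 ∧ ∀ k, σ k ≠ k)).filter (fun σ => σ i = j),
      ∏ k ∈ (Finset.univ.filter (fun k => k < σ k)).erase i, A₀ k (σ k)
    = hafnian (delTwo A₀ i j) := by
  have hne : i ≠ j := ne_of_lt hij
  unfold hafnian delTwo
  -- forward property
  have hprop : ∀ σ : Equiv.Perm ι, σ * σ = 1 → σ i = j →
      ∀ k, (k ≠ i ∧ k ≠ j) ↔ (σ k ≠ i ∧ σ k ≠ j) := by
    intro σ h1 hsij k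
    have h1' : ∀ x, σ (σ x) = x := fun x => by
      have := Equiv.ext_iff.mp h1 x; simpa [Equiv.Perm.mul_apply] using this
    have hsji : σ j = i := by rw [← hsij, h1']
    constructor
    · rintro ⟨hk1, hk2⟩
      constructor
      · intro h; apply hk2; rw [← h1' k, h, hsij]
      · intro h; apply hk1; rw [← h1' k, h, hsji]
    · rintro ⟨hk1, hk2⟩
      constructor
      · intro h; apply hk2; rw [h, hsij]
      · intro h; apply hk1; rw [h, hsji]
  have hmem : ∀ σ ∈ (Finset.univ.filter
      (fun σ : Equiv.Perm ι => σ * σ = 1 ∧ ∀ k, σ k ≠ k)).filter (fun σ => σ i = j),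
      σ * σ = 1 ∧ (∀ k, σ k ≠ k) ∧ σ i = j := by
    intro σ hσ
    simp only [Finset.mem_filter, Finset.mem_univ, true_and] at hσ
    exact ⟨hσ.1.1, hσ.1.2, hσ.2⟩
  refine Finset.sum_bij'
    (fun σ hσ => Equiv.Perm.subtypePerm σ (fun k => (hprop σ (hmem σ hσ).1 (hmem σ hσ).2.2 k).symm))
    (fun τ _ => Equiv.swap i j * Equiv.Perm.extendDomain τ
      (Equiv.refl {k : ι // k ≠ i ∧ k ≠ j}))
    ?_ ?_ ?_ ?_ ?_
  · -- forward membership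
    intro σ hσ
    obtain ⟨h1, h2, h3⟩ := hmem σ hσ
    have h1' : ∀ x, σ (σ x) = x := fun x => by
      have := Equiv.ext_iff.mp h1 x; simpa [Equiv.Perm.mul_apply] using this
    simp only [Finset.mem_filter, Finset.mem_univ, true_and]
    constructor
    · ext x
      simp [Equiv.Perm.mul_apply, h1']
    · intro x
      simp only [Equiv.Perm.subtypePerm_apply, ne_eq, Subtype.ext_iff]
      exact h2 x
  · -- backward membership
    intro τ hτ
    simp only [Finset.mem_filter, Finset.mem_univ, true_and] at hτ ⊢
    obtain ⟨h1, h2⟩ := hτ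
    have h1' : ∀ x, τ (τ x) = x := fun x => by
      have := Equiv.ext_iff.mp h1 x; simpa [Equiv.Perm.mul_apply] using this
    set E := Equiv.Perm.extendDomain τ (Equiv.refl {k : ι // k ≠ i ∧ k ≠ j}) with hE
    have hEi : E i = i := Equiv.Perm.extendDomain_apply_not_subtype _ _ (by simp)
    have hEj : E j = j := Equiv.Perm.extendDomain_apply_not_subtype _ _ (by simp)
    have hEk : ∀ k (hk : k ≠ i ∧ k ≠ j), E k = (τ ⟨k, hk⟩ : ι) := by
      intro k hk
      rw [hE, Equiv.Perm.extendDomain_apply_subtype (p := fun k => k ≠ i ∧ k ≠ j) _ _ hk]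
      rfl
    have happ : ∀ k, (Equiv.swap i j * E) k =
        if hk : k ≠ i ∧ k ≠ j then (τ ⟨k, hk⟩ : ι) else if k = i then j else i := by
      intro k
      by_cases hk : k ≠ i ∧ k ≠ j
      · rw [dif_pos hk, Equiv.Perm.mul_apply, hEk k hk]
        exact Equiv.swap_apply_of_ne_of_ne (τ ⟨k, hk⟩).2.1 (τ ⟨k, hk⟩).2.2
      · rw [dif_neg hk]
        push_neg at hk
        by_cases hki : k = i
        · subst hki
          rw [if_pos rfl, Equiv.Perm.mul_apply, hEi, Equiv.swap_apply_left]
        · rw [if_neg hki]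
          have hkj : k = j := hk hki
          subst hkj
          rw [Equiv.Perm.mul_apply, hEj, Equiv.swap_apply_right]
    refine ⟨⟨?_, ?_⟩, ?_⟩
    · ext k
      rw [Equiv.Perm.mul_apply, happ, happ]
      by_cases hk : k ≠ i ∧ k ≠ j
      · rw [dif_pos hk, dif_pos (τ ⟨k, hk⟩).2]
        simp [h1']
      · push_neg at hk
        by_cases hki : k = i
        · subst hki
          rw [dif_neg (by simp), if_pos rfl, dif_neg (by simp [Ne.symm hne]),
            if_neg (Ne.symm hne)]
          simp
        · have hkj : k = j := hk hki
          subst hkj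
          rw [dif_neg (by simp), if_neg hki, dif_neg (by simp), if_pos rfl]
          simp
    · intro k
      rw [happ]
      by_cases hk : k ≠ i ∧ k ≠ j
      · rw [dif_pos hk]
        intro h
        exact h2 ⟨k, hk⟩ (Subtype.ext h)
      · push_neg at hk
        by_cases hki : k = i
        · subst hki; rw [dif_neg (by simp), if_pos rfl]; exact Ne.symm hne
        · have hkj : k = j := hk hki
          subst hkj
          rw [dif_neg (by simp), if_neg hki]; exact hne
    · rw [happ]
      rw [dif_neg (by simp), if_pos rfl]
  · -- left inverse
    intro σ hσ
    obtain ⟨h1, h2, h3⟩ := hmem σ hσ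
    have h1' : ∀ x, σ (σ x) = x := fun x => by
      have := Equiv.ext_iff.mp h1 x; simpa [Equiv.Perm.mul_apply] using this
    have hsji : σ j = i := by rw [← h3, h1']
    ext k
    by_cases hk : k ≠ i ∧ k ≠ j
    · rw [Equiv.Perm.mul_apply, Equiv.Perm.extendDomain_apply_subtype (p := fun k => k ≠ i ∧ k ≠ j) _ _ hk]
      rw [show ((Equiv.refl {k : ι // k ≠ i ∧ k ≠ j})
        ((σ.subtypePerm (fun k => (hprop σ h1 h3 k).symm)) ((Equiv.refl _).symm ⟨k, hk⟩)) : ι) = σ k from rfl]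
      exact Equiv.swap_apply_of_ne_of_ne ((hprop σ h1 h3 k).mp hk).1 ((hprop σ h1 h3 k).mp hk).2
    · push_neg at hk
      by_cases hki : k = i
      · subst hki
        rw [Equiv.Perm.mul_apply, Equiv.Perm.extendDomain_apply_not_subtype _ _ (by simp),
          Equiv.swap_apply_left, h3]
      · have hkj : k = j := hk hki
        subst hkj
        rw [Equiv.Perm.mul_apply, Equiv.Perm.extendDomain_apply_not_subtype _ _ (by simp),
          Equiv.swap_apply_right, hsji]
  · -- right inverse
    intro τ hτ
    ext ⟨k, hk⟩
    simp only [Equiv.Perm.subtypePerm_apply]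
    rw [Equiv.Perm.mul_apply, Equiv.Perm.extendDomain_apply_subtype (p := fun k => k ≠ i ∧ k ≠ j) _ _ hk]
    rw [show ((Equiv.refl {k : ι // k ≠ i ∧ k ≠ j})
        (τ ((Equiv.refl {k : ι // k ≠ i ∧ k ≠ j}).symm ⟨k, hk⟩)) : ι) = (τ ⟨k, hk⟩ : ι) from rfl]
    rw [Equiv.swap_apply_of_ne_of_ne (τ ⟨k, hk⟩).2.1 (τ ⟨k, hk⟩).2.2]
  · -- values
    intro σ hσ
    obtain ⟨h1, h2, h3⟩ := hmem σ hσ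
    have h1' : ∀ x, σ (σ x) = x := fun x => by
      have := Equiv.ext_iff.mp h1 x; simpa [Equiv.Perm.mul_apply] using this
    have hsji : σ j = i := by rw [← h3, h1']
    refine Finset.prod_bij' (fun k hk => ⟨k, (Finset.mem_erase.mp hk).1, ?_⟩)
      (fun x _ => (x : ι)) ?_ ?_ ?_ ?_ ?_
    · -- k ≠ j
      intro hkj
      have hk' := (Finset.mem_filter.mp (Finset.mem_erase.mp hk).2).2
      rw [hkj, hsji] at hk'
      exact absurd hij (not_lt_of_gt hk')
    · intro k hk
      have hk' := (Finset.mem_filter.mp (Finset.mem_erase.mp hk).2).2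
      simp only [Finset.mem_filter, Finset.mem_univ, true_and]
      exact Subtype.mk_lt_mk.mpr hk'
    · intro x hx
      simp only [Finset.mem_filter, Finset.mem_univ, true_and] at hx
      rw [Finset.mem_erase]
      refine ⟨x.2.1, ?_⟩
      simp only [Finset.mem_filter, Finset.mem_univ, true_and]
      exact hx
    · intro k _; rfl
    · intro x _; rfl
    · intro k _; rfl

theorem half_pair {ι : Type*} [Fintype ι] [LinearOrder ι] (f : ι → ι → ℝ)
    (hf : ∀ i j, f i j = f j i) :
    (1 / 2 : ℝ) * ∑ i, ∑ j ∈ Finset.univ.filter (fun j => j ≠ i), f i j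
      = ∑ i, ∑ j ∈ Finset.univ.filter (fun j => i < j), f i j := by
  classical
  have h1 : ∀ i : ι, ∑ j ∈ Finset.univ.filter (fun j => j ≠ i), f i j
      = (∑ j ∈ Finset.univ.filter (fun j => i < j), f i j)
        + ∑ j ∈ Finset.univ.filter (fun j => j < i), f i j := by
    intro i
    rw [← Finset.sum_union]
    · apply Finset.sum_congr _ (fun _ _ => rfl)
      ext j
      simp only [Finset.mem_filter, Finset.mem_univ, true_and, Finset.mem_union]
      constructor
      · intro h; rcases lt_or_gt_of_ne h with h | h
        · right; exact h
        · left; exact h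
      · rintro (h | h)
        · exact ne_of_gt h
        · exact ne_of_lt h
    · rw [Finset.disjoint_filter]
      intro j _ h1 h2
      exact absurd h1 (not_lt_of_gt h2)
  have h2 : ∑ i : ι, ∑ j ∈ Finset.univ.filter (fun j => j < i), f i j
      = ∑ i : ι, ∑ j ∈ Finset.univ.filter (fun j => i < j), f i j := by
    rw [Finset.sum_comm' (s' := fun j => Finset.univ.filter (fun i => j < i))
      (t' := Finset.univ)]
    · apply Finset.sum_congr rfl
      intro j _
      apply Finset.sum_congr rfl
      intro i _
      exact hf i j
    · intro i j
      simp only [Finset.mem_filter, Finset.mem_univ, true_and, and_comm]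
  have := Finset.sum_congr rfl (fun i (_ : i ∈ (Finset.univ : Finset ι)) => h1 i)
  rw [this, Finset.sum_add_distrib, h2]
  ring

open scoped Classical in
theorem hasDerivAt_hafnian_gen {ι : Type*} [Fintype ι] [LinearOrder ι]
    (A : ℝ → Matrix ι ι ℝ)
    (A' : Matrix ι ι ℝ) (θ₀ : ℝ)
    (hsymm : ∀ θ, (A θ).IsSymm)
    (hdiff : ∀ i j, HasDerivAt (fun θ => A θ i j) (A' i j) θ₀) :
    HasDerivAt (fun θ => hafnian (A θ))
      ((1 / 2) * ∑ i, ∑ j ∈ Finset.univ.filter (fun j => j ≠ i),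
        A' i j * hafnian (delTwo (A θ₀) i j)) θ₀ := by
  -- symmetry of A'
  have hA's : ∀ i j : ι, A' i j = A' j i := by
    intro i j
    refine (hdiff i j).unique ?_
    have heq : (fun θ => A θ i j) = fun θ => A θ j i := by
      funext θ; exact ((hsymm θ).apply i j).symm
    rw [heq]; exact hdiff j i
  -- hafnian delTwo symmetric in i j
  have hhaf : ∀ i j : ι, hafnian (delTwo (A θ₀) j i) = hafnian (delTwo (A θ₀) i j) := by
    intro i j
    let e : {k : ι // k ≠ j ∧ k ≠ i} ≃o {k : ι // k ≠ i ∧ k ≠ j} :=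
      { toEquiv := Equiv.subtypeEquivRight (fun k => and_comm)
        map_rel_iff' := Iff.rfl }
    have hsub : delTwo (A θ₀) j i = (delTwo (A θ₀) i j).submatrix e e := rfl
    rw [hsub, hafnian_reindex e]
  -- the derivative from the product/sum rules
  have hder : HasDerivAt (fun θ => hafnian (A θ))
      (∑ σ ∈ Finset.univ.filter
          (fun σ : Equiv.Perm (ι) => σ * σ = 1 ∧ ∀ k, σ k ≠ k),
        ∑ k ∈ Finset.univ.filter (fun k => k < σ k),
          (∏ l ∈ (Finset.univ.filter (fun l => l < σ l)).erase k, (A θ₀) l (σ l))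
            • A' k (σ k)) θ₀ := by
    simp only [hafnian]
    exact HasDerivAt.fun_sum fun σ _ => HasDerivAt.fun_finsetProd fun k _ => hdiff k (σ k)
  convert hder using 1
  -- algebraic identity
  have hsymf : ∀ i j : ι, A' i j * hafnian (delTwo (A θ₀) i j)
      = A' j i * hafnian (delTwo (A θ₀) j i) := by
    intro i j; rw [hA's i j, hhaf j i]
  rw [half_pair _ hsymf]
  -- rewrite each hafnian by key_sum
  have step1 : ∑ i : ι, ∑ j ∈ Finset.univ.filter (fun j => i < j),
      A' i j * hafnian (delTwo (A θ₀) i j)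
    = ∑ i : ι, ∑ j ∈ Finset.univ.filter (fun j => i < j),
        ∑ σ ∈ (Finset.univ.filter
            (fun σ : Equiv.Perm (ι) => σ * σ = 1 ∧ ∀ k, σ k ≠ k)).filter
            (fun σ => σ i = j),
          A' i j * ∏ l ∈ (Finset.univ.filter (fun l => l < σ l)).erase i, (A θ₀) l (σ l) := by
    apply Finset.sum_congr rfl
    intro i _
    apply Finset.sum_congr rfl
    intro j hj
    simp only [Finset.mem_filter, Finset.mem_univ, true_and] at hj
    rw [← key_sum (A θ₀) hj, Finset.mul_sum]
  rw [step1]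
  -- now a sigma-type bijection
  rw [show (∑ i : ι, ∑ j ∈ Finset.univ.filter (fun j => i < j),
        ∑ σ ∈ (Finset.univ.filter
            (fun σ : Equiv.Perm (ι) => σ * σ = 1 ∧ ∀ k, σ k ≠ k)).filter
            (fun σ => σ i = j),
          A' i j * ∏ l ∈ (Finset.univ.filter (fun l => l < σ l)).erase i, (A θ₀) l (σ l))
      = ∑ x ∈ (Finset.univ.sigma fun i : ι => Finset.univ.filter (fun j => i < j)).sigma
          (fun x => (Finset.univ.filter
            (fun σ : Equiv.Perm (ι) => σ * σ = 1 ∧ ∀ k, σ k ≠ k)).filter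
            (fun σ => σ x.1 = x.2)),
          A' x.1.1 x.1.2 * ∏ l ∈ (Finset.univ.filter (fun l => l < x.2 l)).erase x.1.1,
            (A θ₀) l (x.2 l) from
    (Finset.sum_sigma' _ _ _).trans (Finset.sum_sigma' _ _ _)]
  rw [show (∑ σ ∈ Finset.univ.filter
          (fun σ : Equiv.Perm (ι) => σ * σ = 1 ∧ ∀ k, σ k ≠ k),
        ∑ k ∈ Finset.univ.filter (fun k => k < σ k),
          (∏ l ∈ (Finset.univ.filter (fun l => l < σ l)).erase k, (A θ₀) l (σ l))
            • A' k (σ k))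
      = ∑ z ∈ (Finset.univ.filter
          (fun σ : Equiv.Perm (ι) => σ * σ = 1 ∧ ∀ k, σ k ≠ k)).sigma
          (fun σ => Finset.univ.filter (fun k => k < σ k)),
          (∏ l ∈ (Finset.univ.filter (fun l => l < z.1 l)).erase z.2, (A θ₀) l (z.1 l))
            • A' z.2 (z.1 z.2) from Finset.sum_sigma' _ _ _]
  refine Finset.sum_nbij' (fun x => ⟨x.2, x.1.1⟩) (fun z => ⟨⟨z.2, z.1 z.2⟩, z.1⟩)
    ?_ ?_ ?_ ?_ ?_
  · rintro ⟨⟨i, j⟩, σ⟩ hx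
    simp only [Finset.mem_sigma, Finset.mem_filter, Finset.mem_univ, true_and] at hx ⊢
    obtain ⟨hij, hσ, hσij⟩ := hx
    exact ⟨hσ, by rw [hσij]; exact hij⟩
  · rintro ⟨σ, k⟩ hz
    simp only [Finset.mem_sigma, Finset.mem_filter, Finset.mem_univ, true_and] at hz ⊢
    exact ⟨hz.2, hz.1, trivial⟩
  · rintro ⟨⟨i, j⟩, σ⟩ hx
    simp only [Finset.mem_sigma, Finset.mem_filter, Finset.mem_univ, true_and] at hx
    obtain ⟨hij, hσ, hσij⟩ := hx
    simp only
    rw [hσij]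
  · rintro ⟨σ, k⟩ _
    rfl
  · rintro ⟨⟨i, j⟩, σ⟩ hx
    simp only [Finset.mem_sigma, Finset.mem_filter, Finset.mem_univ, true_and] at hx
    obtain ⟨hij, hσ, hσij⟩ := hx
    simp only [smul_eq_mul]
    rw [hσij]
    exact mul_comm _ _

theorem hafnian_inst_congr {ι : Type*} {R : Type*} {F1 F2 : Fintype ι} [LinearOrder ι]
    [CommRing R] (A : Matrix ι ι R) :
    @hafnian ι F1 _ R _ A = @hafnian ι F2 _ R _ A := by
  cases Subsingleton.elim F1 F2; rfl

theorem filter_inst_eq {α : Type*} {P : α → Prop} (h1 h2 : DecidablePred P) (s : Finset α) :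
    @Finset.filter α P h1 s = @Finset.filter α P h2 s := by
  have : h1 = h2 := funext fun a => Subsingleton.elim _ _
  subst this; rfl

/-- the derivative of `θ ↦ Haf (A θ)` for a family of symmetric `2m × 2m`
real matrices with entrywise derivative `A'` at `θ₀` is
`(1/2) · Σ_{i ≠ j} (A')_{ij} · Haf (A(θ₀)_{−i−j})`. -/
theorem hasDerivAt_hafnian {m : ℕ} (hm : 1 ≤ m)
    (A : ℝ → Matrix (Fin (2 * m)) (Fin (2 * m)) ℝ)
    (A' : Matrix (Fin (2 * m)) (Fin (2 * m)) ℝ) (θ₀ : ℝ)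
    (hsymm : ∀ θ, (A θ).IsSymm)
    (hdiff : ∀ i j, HasDerivAt (fun θ => A θ i j) (A' i j) θ₀) :
    HasDerivAt (fun θ => hafnian (A θ))
      ((1 / 2) * ∑ i, ∑ j ∈ Finset.univ.filter (fun j => j ≠ i),
        A' i j * hafnian (delTwo (A θ₀) i j)) θ₀ := by

  have h := hasDerivAt_hafnian_gen A A' θ₀ hsymm hdiff
  refine h.congr_deriv ?_
  exact congrArg ((1/2 : ℝ) * ·) (Finset.sum_congr rfl fun i _ =>
    Finset.sum_congr (filter_inst_eq _ _ _) fun j _ =>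
      congrArg (A' i j * ·) (hafnian_inst_congr _))
end

section
/- Let 𝒜 : ℝ → Matrix (Fin (2m)) (Fin (2m)) ℝ be a family of matrices whose entries are differentiable at θ₀, let X be the 2m×2m block matrix [[0, I_m], [I_m, 0]], and suppose that X − 𝒜(θ₀) is invertible and det(I − X·𝒜(θ)) > 0 on a neighborhood of θ₀. Then the function θ ↦ (det(I − X·𝒜(θ)))^{1/2} is differentiable at θ₀, with derivative −(1/2) · (det(I − X·𝒜(θ₀)))^{1/2} · Tr[(X − 𝒜(θ₀))^{-1} · 𝒜'(θ₀)], where 𝒜'(θ₀) is the entrywise derivative. -/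
open Finset Matrix

/-- The `2m × 2m` block matrix `X = [[0, I_m], [I_m, 0]]` that swaps the two blocks
of indices. -/
def Xswap (m : ℕ) : Matrix (Fin (2 * m)) (Fin (2 * m)) ℝ :=
  Matrix.of fun i j => if (i : ℕ) = (j : ℕ) + m ∨ (j : ℕ) = (i : ℕ) + m then 1 else 0

noncomputable def detCM (n : ℕ) : ContinuousMultilinearMap ℝ (fun _ : Fin n => Fin n → ℝ) ℝ :=
  { (Matrix.detRowAlternating : (Fin n → ℝ) [⋀^Fin n]→ₗ[ℝ] ℝ).toMultilinearMap with
    cont := by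
      show Continuous fun v : Fin n → Fin n → ℝ => Matrix.det (Matrix.of v)
      exact continuous_id.matrix_det }

lemma det_hasDerivAt {n : ℕ} (A : ℝ → Matrix (Fin n) (Fin n) ℝ)
    (A' : Matrix (Fin n) (Fin n) ℝ) (θ₀ : ℝ)
    (h : ∀ i j, HasDerivAt (fun θ => A θ i j) (A' i j) θ₀) :
    HasDerivAt (fun θ => (A θ).det) (Matrix.trace (Matrix.adjugate (A θ₀) * A')) θ₀ := by
  have hg : HasDerivAt (F := Fin n → Fin n → ℝ) (fun θ => A θ) A' θ₀ :=
    hasDerivAt_pi.2 fun i => hasDerivAt_pi.2 fun j => h i j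
  have H := ((detCM n).hasFDerivAt (x := (A θ₀ : Matrix (Fin n) (Fin n) ℝ))).comp_hasDerivAt θ₀ hg
  have key : (detCM n).linearDeriv (A θ₀) A'
      = Matrix.trace (Matrix.adjugate (A θ₀) * A') := by
    erw [ContinuousMultilinearMap.linearDeriv_apply]
    have : ∀ i : Fin n, (detCM n) (Function.update (A θ₀ : Fin n → Fin n → ℝ) i (A' i))
        = ((A θ₀).updateRow i (A' i)).det := by
      intro i
      rfl
    simp_rw [this]
    have : ∀ i : Fin n, ((A θ₀).updateRow i (A' i)).det
        = ∑ j, Matrix.adjugate (A θ₀) j i * A' i j := by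
      intro i
      rw [← Matrix.cramer_transpose_apply, Matrix.cramer_eq_adjugate_mulVec, Matrix.mulVec,
        dotProduct]
      simp [← Matrix.adjugate_transpose, Matrix.transpose_apply]
    simp_rw [this, Matrix.trace, Matrix.diag, Matrix.mul_apply]
    exact Finset.sum_comm
  rw [key] at H
  exact H

/-- the swap involution on `Fin (2*m)` -/
def sigma (m : ℕ) (i : Fin (2 * m)) : Fin (2 * m) :=
  ⟨if (i : ℕ) < m then (i : ℕ) + m else (i : ℕ) - m, by have := i.2; split <;> omega⟩

lemma Xswap_apply (m : ℕ) (i j : Fin (2 * m)) :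
    Xswap m i j = if j = sigma m i then 1 else 0 := by
  have hi := i.2
  have hj := j.2
  have hiff : ((i : ℕ) = (j : ℕ) + m ∨ (j : ℕ) = (i : ℕ) + m) ↔ j = sigma m i := by
    rw [Fin.ext_iff]
    show _ ↔ (j : ℕ) = (if (i : ℕ) < m then (i : ℕ) + m else (i : ℕ) - m)
    split_ifs with h <;> omega
  show (if (i : ℕ) = (j : ℕ) + m ∨ (j : ℕ) = (i : ℕ) + m then (1:ℝ) else 0) = _
  exact if_congr hiff rfl rfl

lemma sigma_sigma (m : ℕ) (i : Fin (2 * m)) : sigma m (sigma m i) = i := by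
  have := i.2
  simp only [sigma, Fin.ext_iff]
  split_ifs <;> simp_all <;> omega

lemma Xswap_mul_Xswap (m : ℕ) : Xswap m * Xswap m = 1 := by
  ext i j
  rw [Matrix.mul_apply, Matrix.one_apply]
  simp_rw [Xswap_apply]
  rw [Finset.sum_eq_single (sigma m i)]
  · rw [if_pos rfl, one_mul, sigma_sigma]
    simp [eq_comm]
  · intro k _ hk
    rw [if_neg hk, zero_mul]
  · simp

/-- for a family `𝒜` of `2m × 2m` real matrices with entrywise derivative `𝒜'`
at `θ₀`, with `X − 𝒜(θ₀)` invertible and `det(I − X·𝒜(θ)) > 0` near `θ₀`, the map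
`θ ↦ det(I − X·𝒜(θ))^{1/2}` is differentiable at `θ₀` with derivative
`−(1/2) · det(I − X·𝒜(θ₀))^{1/2} · Tr[(X − 𝒜(θ₀))⁻¹ · 𝒜'(θ₀)]`. -/
theorem hasDerivAt_sqrt_det {m : ℕ}
    (𝒜 : ℝ → Matrix (Fin (2 * m)) (Fin (2 * m)) ℝ)
    (𝒜' : Matrix (Fin (2 * m)) (Fin (2 * m)) ℝ) (θ₀ : ℝ)
    (hdiff : ∀ i j, HasDerivAt (fun θ => 𝒜 θ i j) (𝒜' i j) θ₀)
    (hinv : IsUnit (Xswap m - 𝒜 θ₀))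
    (hpos : ∀ᶠ θ in nhds θ₀, 0 < (1 - Xswap m * 𝒜 θ).det) :
    HasDerivAt (fun θ => Real.sqrt (1 - Xswap m * 𝒜 θ).det)
      (-(1 / 2) * Real.sqrt (1 - Xswap m * 𝒜 θ₀).det *
        Matrix.trace ((Xswap m - 𝒜 θ₀)⁻¹ * 𝒜')) θ₀ := by
  set X := Xswap m with hX
  set A₀ := 𝒜 θ₀ with hA₀
  have hXX : X * X = 1 := Xswap_mul_Xswap m
  have hXunit : IsUnit X := (Matrix.isUnit_iff_isUnit_det _).mpr (Matrix.isUnit_det_of_right_inverse hXX)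
  set B₀ := 1 - X * A₀ with hB₀
  set d := B₀.det with hd_def
  set T := Matrix.trace ((X - A₀)⁻¹ * 𝒜') with hT
  have hd : 0 < d := hpos.self_of_nhds
  have hd0 : d ≠ 0 := ne_of_gt hd
  -- entrywise derivative of θ ↦ 1 - X * 𝒜 θ
  have hB' : ∀ i j, HasDerivAt (fun θ => (1 - X * 𝒜 θ) i j) ((-(X * 𝒜')) i j) θ₀ := by
    intro i j
    have h1 : HasDerivAt (fun θ => (X * 𝒜 θ) i j) ((X * 𝒜') i j) θ₀ := by
      simp_rw [Matrix.mul_apply]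
      exact HasDerivAt.fun_sum fun k _ => (hdiff k j).const_mul (X i k)
    have h2 := (hasDerivAt_const θ₀ ((1 : Matrix (Fin (2 * m)) (Fin (2 * m)) ℝ) i j)).sub h1
    simp only [Matrix.sub_apply, Matrix.neg_apply, zero_sub] at h2 ⊢
    exact h2
  have hdet := det_hasDerivAt (fun θ => 1 - X * 𝒜 θ) (-(X * 𝒜')) θ₀ hB'
  have hfact : B₀ = X * (X - A₀) := by rw [hB₀, Matrix.mul_sub, hXX]
  have hunitB : IsUnit B₀ := by rw [hfact]; exact hXunit.mul hinv
  have hdet_unit : IsUnit B₀.det := (Matrix.isUnit_iff_isUnit_det _).mp hunitB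
  have hBinv : B₀⁻¹ * (X * 𝒜') = (X - A₀)⁻¹ * 𝒜' := by
    rw [hfact, Matrix.mul_inv_rev, Matrix.inv_eq_right_inv hXX, mul_assoc,
      ← mul_assoc X X, hXX, one_mul]
  have hadj : Matrix.adjugate B₀ = d • B₀⁻¹ := by
    have h1 : B₀⁻¹ * B₀ = 1 := Matrix.nonsing_inv_mul _ hdet_unit
    calc Matrix.adjugate B₀ = (B₀⁻¹ * B₀) * Matrix.adjugate B₀ := by rw [h1, one_mul]
      _ = B₀⁻¹ * (B₀ * Matrix.adjugate B₀) := by rw [mul_assoc]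
      _ = B₀⁻¹ * (d • 1) := by rw [Matrix.mul_adjugate]
      _ = d • B₀⁻¹ := by rw [Matrix.mul_smul, mul_one]
  have htr : Matrix.trace (Matrix.adjugate B₀ * (-(X * 𝒜'))) = -(d * T) := by
    rw [hadj, Matrix.mul_neg, Matrix.trace_neg, Matrix.smul_mul, Matrix.trace_smul, hBinv]
    simp [hT, smul_eq_mul]
  have H := hdet.sqrt hd0
  rw [htr] at H
  convert H using 1
  have hs : Real.sqrt d ≠ 0 := ne_of_gt (Real.sqrt_pos.2 hd)
  have hdd : d = Real.sqrt d * Real.sqrt d := (Real.mul_self_sqrt hd.le).symm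
  rw [eq_div_iff (by positivity : (2:ℝ) * Real.sqrt d ≠ 0)]
  linear_combination T * hdd
end

section
/- Let M = 2m be even, let A be a symmetric M×M matrix over a commutative ring, and fix k, ℓ ∈ {1,…,M}. Then Haf(A_{+e_k+e_ℓ}) = A_{kℓ} · Haf(A) + Σ_{j=1}^{M} A_{jℓ} · Haf((A_{+e_k})_{−j}), where A_{+e_k+e_ℓ} is the (M+2)×(M+2) matrix obtained from A by appending a copy of row/column k and a copy of row/column ℓ, A_{+e_k} is the (M+1)×(M+1) matrix obtained by appending a copy of row/column k, and (A_{+e_k})_{−j} is A_{+e_k} with its j-th row and column (j ∈ {1,…,M}) deleted. -/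
open Finset Matrix

/-- `A_{−j}`: the matrix obtained from `A` by deleting row `j` and column `j`. -/
def delOne {ι : Type*} {R : Type*} (A : Matrix ι ι R) (j : ι) :
    Matrix {k : ι // k ≠ j} {k : ι // k ≠ j} R :=
  A.submatrix Subtype.val Subtype.val

/-- `A_{+e_k}`: the `(M+1) × (M+1)` matrix obtained from an `M × M` matrix `A` by appending a
copy of row/column `k` (the new last row and column duplicate the `k`-th ones, with new
diagonal entry `A k k`). -/
def appendOne {M : ℕ} {R : Type*} (A : Matrix (Fin M) (Fin M) R) (k : Fin M) :
    Matrix (Fin (M + 1)) (Fin (M + 1)) R :=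
  A.submatrix (Fin.snoc (fun i : Fin M => i) k) (Fin.snoc (fun i : Fin M => i) k)

lemma hafnian_reindex_s6 {ι κ : Type*} [Fintype ι] [LinearOrder ι] [Fintype κ] [LinearOrder κ]
    {R : Type*} [CommRing R] (B : Matrix ι ι R) (e : κ ≃ ι)
    (he : ∀ a b : κ, e a < e b ↔ a < b) :
    hafnian (B.submatrix e e) = hafnian B := by
  classical
  unfold hafnian
  refine Finset.sum_equiv e.permCongr ?_ ?_
  · intro σ
    simp only [Finset.mem_filter, Finset.mem_univ, true_and]
    constructor
    · rintro ⟨h1, h2⟩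
      constructor
      · ext x
        have := Equiv.ext_iff.mp h1 (e.symm x)
        simp only [Equiv.Perm.mul_apply, Equiv.Perm.one_apply] at this ⊢
        simp [Equiv.permCongr_apply, this]
      · intro x hx
        apply h2 (e.symm x)
        have : e (σ (e.symm x)) = x := hx
        simpa using congrArg e.symm this
    · rintro ⟨h1, h2⟩
      constructor
      · ext x
        have := Equiv.ext_iff.mp h1 (e x)
        simp only [Equiv.Perm.mul_apply, Equiv.Perm.one_apply, Equiv.permCongr_apply,
          Equiv.symm_apply_apply] at this ⊢
        exact e.injective (by simpa using this)
      · intro x hx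
        have := h2 (e x)
        simp only [Equiv.permCongr_apply, Equiv.symm_apply_apply] at this
        exact this (congrArg e hx)
  · intro σ hσ
    refine Finset.prod_equiv e ?_ ?_
    · intro i
      simp only [Finset.mem_filter, Finset.mem_univ, true_and]
      rw [Equiv.permCongr_apply, Equiv.symm_apply_apply]
      exact (he i (σ i)).symm
    · intro i hi
      simp [Equiv.permCongr_apply, Matrix.submatrix_apply]

lemma hafnian_expand {ι : Type*} [Fintype ι] [LinearOrder ι] {R : Type*} [CommRing R]
    (B : Matrix ι ι R) (a : ι) (ha : ∀ i, i ≤ a) :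
    hafnian B = ∑ j ∈ Finset.univ.filter (· ≠ a),
      B j a * hafnian (B.submatrix (Subtype.val : {i // i ≠ j ∧ i ≠ a} → ι) Subtype.val) := by
  classical
  unfold hafnian
  rw [← Finset.sum_fiberwise_of_maps_to (g := fun σ : Equiv.Perm ι => σ a)
    (t := Finset.univ.filter (· ≠ a)) (fun σ hσ => by
      simp only [Finset.mem_filter, Finset.mem_univ, true_and] at hσ ⊢
      exact hσ.2 a)]
  refine Finset.sum_congr rfl fun j hj => ?_
  have hja : j ≠ a := by simpa using hj
  have hjlt : j < a := lt_of_le_of_ne (ha j) hja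
  rw [Finset.mul_sum]
  have hmem : ∀ σ : Equiv.Perm ι,
      σ ∈ (Finset.univ.filter fun σ : Equiv.Perm ι => σ * σ = 1 ∧ ∀ i, σ i ≠ i).filter
        (fun σ => σ a = j) ↔ ((∀ x, σ (σ x) = x) ∧ (∀ i, σ i ≠ i) ∧ σ a = j) := by
    intro σ
    simp only [Finset.mem_filter, Finset.mem_univ, true_and, and_assoc]
    constructor
    · rintro ⟨h1, h2, h3⟩
      exact ⟨fun x => by simpa [Equiv.Perm.mul_apply] using Equiv.ext_iff.mp h1 x, h2, h3⟩
    · rintro ⟨h1, h2, h3⟩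
      exact ⟨Equiv.ext fun x => by simpa [Equiv.Perm.mul_apply] using h1 x, h2, h3⟩
  have key : ∀ σ : Equiv.Perm ι, (∀ x, σ (σ x) = x) → σ a = j →
      ∀ i, (i ≠ j ∧ i ≠ a) ↔ (σ i ≠ j ∧ σ i ≠ a) := by
    intro σ hinv hja' i
    have hsja : σ j = a := by rw [← hja']; exact hinv a
    constructor
    · rintro ⟨h1, h2⟩
      refine ⟨fun h => h2 ?_, fun h => h1 ?_⟩
      · have := congrArg σ h; rw [hinv, hsja] at this; exact this
      · have := congrArg σ h; rw [hinv, hja'] at this; exact this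
    · rintro ⟨h1, h2⟩
      exact ⟨fun h => h2 (by rw [h, hsja]), fun h => h1 (by rw [h, hja'])⟩
  -- behaviour of the backward map
  have hbext : ∀ (τ : Equiv.Perm {i : ι // i ≠ j ∧ i ≠ a}) (x : ι) (hx : x ≠ j ∧ x ≠ a),
      (Equiv.swap j a * τ.extendDomain (Equiv.refl {i : ι // i ≠ j ∧ i ≠ a})) x
        = (τ ⟨x, hx⟩ : ι) := by
    intro τ x hx
    have h1 : τ.extendDomain (Equiv.refl {i : ι // i ≠ j ∧ i ≠ a}) x = (τ ⟨x, hx⟩ : ι) := by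
      simpa using Equiv.Perm.extendDomain_apply_subtype τ (Equiv.refl _) hx
    simp only [Equiv.Perm.mul_apply, h1]
    exact Equiv.swap_apply_of_ne_of_ne (τ ⟨x, hx⟩).2.1 (τ ⟨x, hx⟩).2.2
  have hbj : ∀ (τ : Equiv.Perm {i : ι // i ≠ j ∧ i ≠ a}),
      (Equiv.swap j a * τ.extendDomain (Equiv.refl {i : ι // i ≠ j ∧ i ≠ a})) j = a := by
    intro τ
    have h1 : τ.extendDomain (Equiv.refl {i : ι // i ≠ j ∧ i ≠ a}) j = j :=
      Equiv.Perm.extendDomain_apply_not_subtype τ (Equiv.refl _) (by simp)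
    simp only [Equiv.Perm.mul_apply, h1]
    exact Equiv.swap_apply_left j a
  have hba : ∀ (τ : Equiv.Perm {i : ι // i ≠ j ∧ i ≠ a}),
      (Equiv.swap j a * τ.extendDomain (Equiv.refl {i : ι // i ≠ j ∧ i ≠ a})) a = j := by
    intro τ
    have h1 : τ.extendDomain (Equiv.refl {i : ι // i ≠ j ∧ i ≠ a}) a = a :=
      Equiv.Perm.extendDomain_apply_not_subtype τ (Equiv.refl _) (by simp)
    simp only [Equiv.Perm.mul_apply, h1]
    exact Equiv.swap_apply_right j a
  refine Finset.sum_bij'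
    (i := fun σ hσ => σ.subtypePerm (p := fun i => i ≠ j ∧ i ≠ a)
      (fun i => (key σ ((hmem σ).mp hσ).1 ((hmem σ).mp hσ).2.2 i).symm))
    (j := fun τ _ => Equiv.swap j a *
      τ.extendDomain (Equiv.refl {i : ι // i ≠ j ∧ i ≠ a}))
    ?_ ?_ ?_ ?_ ?_
  · -- hi : forward lands in target
    intro σ hσ
    obtain ⟨hinv, hfpf, hja'⟩ := (hmem σ).mp hσ
    simp only [Finset.mem_filter, Finset.mem_univ, true_and]
    constructor
    · ext x
      simp only [Equiv.Perm.mul_apply, Equiv.Perm.one_apply, Equiv.Perm.subtypePerm_apply]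
      exact hinv x
    · intro x hx
      exact hfpf x (congrArg Subtype.val hx)
  · -- hj : backward lands in fiber
    intro τ hτ
    simp only [Finset.mem_filter, Finset.mem_univ, true_and] at hτ
    obtain ⟨hτ1, hτ2⟩ := hτ
    have hτinv : ∀ x, τ (τ x) = x := fun x => by
      simpa [Equiv.Perm.mul_apply] using Equiv.ext_iff.mp hτ1 x
    refine (hmem _).mpr ⟨?_, ?_, hba τ⟩
    · intro x
      by_cases hxj : x = j
      · rw [hxj, hbj τ, hba τ]
      by_cases hxa : x = a
      · rw [hxa, hba τ, hbj τ]
      · rw [hbext τ x ⟨hxj, hxa⟩, hbext τ _ (τ ⟨x, ⟨hxj, hxa⟩⟩).2, Subtype.coe_eta]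
        exact congrArg Subtype.val (hτinv ⟨x, ⟨hxj, hxa⟩⟩)
    · intro x
      by_cases hxj : x = j
      · rw [hxj, hbj τ]; exact fun h => hja h.symm
      by_cases hxa : x = a
      · rw [hxa, hba τ]; exact fun h => hja h
      · rw [hbext τ x ⟨hxj, hxa⟩]
        intro h
        exact hτ2 ⟨x, ⟨hxj, hxa⟩⟩ (Subtype.ext h)
  · -- left_inv
    intro σ hσ
    obtain ⟨hinv, hfpf, hja'⟩ := (hmem σ).mp hσ
    have hsja : σ j = a := by rw [← hja']; exact hinv a
    ext x
    by_cases hxj : x = j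
    · rw [hxj, hbj, hsja]
    by_cases hxa : x = a
    · rw [hxa, hba, hja']
    · rw [hbext _ x ⟨hxj, hxa⟩]
      rfl
  · -- right_inv
    intro τ hτ
    ext x
    obtain ⟨x, hx⟩ := x
    simp only [Equiv.Perm.subtypePerm_apply]
    exact hbext τ x hx
  · -- products
    intro σ hσ
    obtain ⟨hinv, hfpf, hja'⟩ := (hmem σ).mp hσ
    have hsja : σ j = a := by rw [← hja']; exact hinv a
    have hjmem : j ∈ Finset.univ.filter (fun i => i < σ i) := by
      simp [hsja, hjlt]
    rw [← Finset.mul_prod_erase _ _ hjmem, hsja]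
    congr 1
    refine (Finset.prod_bij (i := fun (x : {i : ι // i ≠ j ∧ i ≠ a}) _ => (x : ι)) ?_ ?_ ?_ ?_).symm
    · intro x hx
      simp only [Finset.mem_filter, Finset.mem_univ, true_and] at hx
      rw [Finset.mem_erase]
      refine ⟨x.2.1, ?_⟩
      simp only [Finset.mem_filter, Finset.mem_univ, true_and]
      exact hx
    · intro x _ y _ h
      exact Subtype.ext h
    · intro i hi
      rw [Finset.mem_erase] at hi
      obtain ⟨hij, hi⟩ := hi
      simp only [Finset.mem_filter, Finset.mem_univ, true_and] at hi
      have hia : i ≠ a := by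
        intro h
        rw [h, hja'] at hi
        exact absurd (hi.trans hjlt) (lt_irrefl _)
      refine ⟨⟨i, ⟨hij, hia⟩⟩, ?_, rfl⟩
      simp only [Finset.mem_filter, Finset.mem_univ, true_and]
      exact hi
    · intro x hx
      rfl


def eAux1 (n : ℕ) : Fin n ≃ {i : Fin (n+1+1) // i ≠ (Fin.last n).castSucc ∧ i ≠ Fin.last (n+1)} where
  toFun i := ⟨i.castSucc.castSucc, by
    constructor <;> · simp only [ne_eq, Fin.ext_iff, Fin.coe_castSucc, Fin.val_last]; omega⟩
  invFun x := ⟨x.1.1, by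
    have h1 := x.2.1
    have h2 := x.2.2
    rw [ne_eq, Fin.ext_iff] at h1 h2
    simp only [Fin.coe_castSucc, Fin.val_last] at h1 h2
    have hv := x.1.isLt
    omega⟩
  left_inv i := by simp [Fin.ext_iff]
  right_inv x := by
    apply Subtype.ext
    simp [Fin.ext_iff]

def eAux2 (n : ℕ) (j : Fin (n+1)) :
    {i : Fin (n+1) // i ≠ j} ≃ {i : Fin (n+1+1) // i ≠ j.castSucc ∧ i ≠ Fin.last (n+1)} where
  toFun x := ⟨x.1.castSucc, by
    refine ⟨?_, ?_⟩
    · simpa [Fin.ext_iff] using fun h => x.2 (Fin.ext h)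
    · simp only [ne_eq, Fin.ext_iff, Fin.coe_castSucc, Fin.val_last]
      exact Nat.ne_of_lt x.1.2⟩
  invFun x := ⟨⟨x.1.1, by
      have h2 := x.2.2
      rw [ne_eq, Fin.ext_iff] at h2
      simp only [Fin.val_last] at h2
      have hv := x.1.isLt
      omega⟩, by
    intro h
    apply x.2.1
    apply Fin.ext
    simpa [Fin.ext_iff] using h⟩
  left_inv x := by
    apply Subtype.ext
    apply Fin.ext
    simp
  right_inv x := by
    apply Subtype.ext
    apply Fin.ext
    simp

lemma eAux1_lt (n : ℕ) (a b : Fin n) : eAux1 n a < eAux1 n b ↔ a < b := by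
  rw [← Subtype.coe_lt_coe]
  show a.castSucc.castSucc < b.castSucc.castSucc ↔ a < b
  rw [Fin.castSucc_lt_castSucc_iff, Fin.castSucc_lt_castSucc_iff]

lemma eAux2_lt (n : ℕ) (j : Fin (n+1)) (a b : {i : Fin (n+1) // i ≠ j}) :
    eAux2 n j a < eAux2 n j b ↔ a < b := by
  rw [← Subtype.coe_lt_coe, ← Subtype.coe_lt_coe (x := a)]
  show a.1.castSucc < b.1.castSucc ↔ (a : Fin (n+1)) < b
  rw [Fin.castSucc_lt_castSucc_iff]



lemma sum_filter_ne_last {n : ℕ} {M : Type*} [AddCommGroup M]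
    {D : DecidablePred (fun j : Fin (n+1) => j ≠ Fin.last n)} (f : Fin (n+1) → M) :
    ∑ x ∈ @Finset.filter _ (fun j => j ≠ Fin.last n) D Finset.univ, f x
      = ∑ i : Fin n, f i.castSucc := by
  rw [Finset.filter_congr_decidable]
  have key : Finset.filter (fun j => j ≠ Fin.last n) Finset.univ
      = Finset.univ.erase (Fin.last n) := by
    ext x
    simp [Finset.mem_erase, and_comm]
  rw [key]
  have h1 := Fin.sum_univ_castSucc f
  have h2 := Finset.sum_erase_add Finset.univ f (Finset.mem_univ (Fin.last n))
  exact add_right_cancel (h2.trans h1)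

set_option maxHeartbeats 1000000 in
/-- for a symmetric `2m × 2m` matrix `A` over a commutative ring and indices
`k, ℓ`, the hafnian of `A_{+e_k+e_ℓ}` (append a copy of row/column `k`, then a copy of
row/column `ℓ`) satisfies
`Haf(A_{+e_k+e_ℓ}) = A_{kℓ}·Haf(A) + Σ_{j=1}^{2m} A_{jℓ}·Haf((A_{+e_k})_{−j})`,
where `(A_{+e_k})_{−j}` deletes row/column `j ∈ {1,…,2m}` from `A_{+e_k}`. -/
theorem hafnian_append_two {m : ℕ} {R : Type*} [CommRing R]
    (A : Matrix (Fin (2 * m)) (Fin (2 * m)) R) (hA : A.IsSymm) (k ℓ : Fin (2 * m)) :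
    hafnian (appendOne (appendOne A k) ℓ.castSucc) =
      A k ℓ * hafnian A +
        ∑ j : Fin (2 * m), A j ℓ * hafnian (delOne (appendOne A k) j.castSucc) := by
  classical
  rw [hafnian_expand (appendOne (appendOne A k) ℓ.castSucc) (Fin.last (2*m+1))
    (fun i => Fin.le_last i)]
  rw [sum_filter_ne_last, Fin.sum_univ_castSucc]
  rw [add_comm]
  congr 1
  · -- last term
    refine congrArg₂ (· * ·) ?_ ?_
    · simp [appendOne, Matrix.submatrix_apply]
    · have h1 := hafnian_reindex_s6 ((appendOne (appendOne A k) ℓ.castSucc).submatrix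
          (Subtype.val : {i : Fin (2*m+1+1) // i ≠ (Fin.last (2*m)).castSucc
            ∧ i ≠ Fin.last (2*m+1)} → _) Subtype.val) (eAux1 (2*m)) (eAux1_lt (2*m))
      have h2 : ((appendOne (appendOne A k) ℓ.castSucc).submatrix
          (Subtype.val : {i : Fin (2*m+1+1) // i ≠ (Fin.last (2*m)).castSucc
            ∧ i ≠ Fin.last (2*m+1)} → _) Subtype.val).submatrix
          (eAux1 (2*m)) (eAux1 (2*m)) = A := by
        ext i i'
        simp [eAux1, appendOne, Matrix.submatrix_apply]
      rw [h2] at h1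
      convert h1.symm using 2
  · refine Finset.sum_congr rfl fun j _ => ?_
    refine congrArg₂ (· * ·) ?_ ?_
    · simp [appendOne, Matrix.submatrix_apply]
    · have h1 := hafnian_reindex_s6 ((appendOne (appendOne A k) ℓ.castSucc).submatrix
          (Subtype.val : {i : Fin (2*m+1+1) // i ≠ j.castSucc.castSucc
            ∧ i ≠ Fin.last (2*m+1)} → _) Subtype.val)
          (eAux2 (2*m) j.castSucc) (eAux2_lt (2*m) j.castSucc)
      have h2 : ((appendOne (appendOne A k) ℓ.castSucc).submatrix
          (Subtype.val : {i : Fin (2*m+1+1) // i ≠ j.castSucc.castSucc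
            ∧ i ≠ Fin.last (2*m+1)} → _) Subtype.val).submatrix
          (eAux2 (2*m) j.castSucc) (eAux2 (2*m) j.castSucc)
          = delOne (appendOne A k) j.castSucc := by
        ext x y
        simp [eAux2, appendOne, delOne, Matrix.submatrix_apply]
      rw [h2] at h1
      convert h1.symm using 2
end

section
/- Let m ≥ 1, let V be a real symmetric 2m×2m matrix, let Z = diag(I_m, −I_m), and suppose V + Z/2 is positive semidefinite and V + I/2 is positive definite. Let w_1,…,w_m ∈ [0,1], W = diag(w_1,…,w_m), and 𝒲 = W ⊕ W (the 2m×2m block-diagonal matrix with two copies of W). Then the matrix B = I − 𝒲 + 𝒲^{1/2} (V + I/2)^{-1} 𝒲^{1/2} is positive definite, and the matrix V_𝒲 := −I/2 + B^{-1} satisfies: V_𝒲 + Z/2 is positive semidefinite. -/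
open Matrix

/-- `Z = diag(I_m, −I_m) = σ^z ⊗ I_m` as a `2m × 2m` matrix. -/
def Zmat (m : ℕ) : Matrix (Fin (2 * m)) (Fin (2 * m)) ℝ :=
  Matrix.diagonal fun i => if (i : ℕ) < m then 1 else -1

/-- `𝒲 = W ⊕ W`: the doubled vector of weights, `(w_1,…,w_m,w_1,…,w_m)`. -/
def wExt {m : ℕ} (w : Fin m → ℝ) : Fin (2 * m) → ℝ := fun i =>
  if h : (i : ℕ) < m then w ⟨i, h⟩ else w ⟨(i : ℕ) - m, by have := i.isLt; omega⟩

/-- `B = I − 𝒲 + 𝒲^{1/2} (V + I/2)⁻¹ 𝒲^{1/2}`, with `𝒲 = W ⊕ W` and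
`𝒲^{1/2} = diag(√w) ⊕ diag(√w)`. -/
noncomputable def Bmat {m : ℕ} (V : Matrix (Fin (2 * m)) (Fin (2 * m)) ℝ)
    (w : Fin m → ℝ) : Matrix (Fin (2 * m)) (Fin (2 * m)) ℝ :=
  1 - Matrix.diagonal (wExt w) +
    Matrix.diagonal (fun i => Real.sqrt (wExt w i)) * (V + (1 / 2 : ℝ) • 1)⁻¹ *
      Matrix.diagonal (fun i => Real.sqrt (wExt w i))

/- ------------------  Auxiliary lemmas  ------------------ -/

lemma symm_dot_aux {n : Type*} [Fintype n] {M : Matrix n n ℝ} (hM : M.IsHermitian)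
    (a b : n → ℝ) : b ⬝ᵥ M *ᵥ a = a ⬝ᵥ M *ᵥ b := by
  rw [dotProduct_mulVec, ← mulVec_transpose, dotProduct_comm,
    ← conjTranspose_eq_transpose_of_trivial, hM.eq]

/-- Cauchy–Schwarz for a positive semidefinite real matrix. -/
lemma psd_cs_aux {n : Type*} [Fintype n] {M : Matrix n n ℝ} (hM : M.PosSemidef) (a b : n → ℝ) :
    (a ⬝ᵥ M *ᵥ b) ^ 2 ≤ (a ⬝ᵥ M *ᵥ a) * (b ⬝ᵥ M *ᵥ b) := by
  have key : ∀ t : ℝ, 0 ≤ (b ⬝ᵥ M *ᵥ b) * (t * t) + (2 * (a ⬝ᵥ M *ᵥ b)) * t + a ⬝ᵥ M *ᵥ a := by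
    intro t
    have h := hM.dotProduct_mulVec_nonneg (a + t • b)
    rw [star_trivial] at h
    simp only [mulVec_add, mulVec_smul, dotProduct_add, add_dotProduct, smul_dotProduct,
      dotProduct_smul, smul_eq_mul, symm_dot_aux hM.1 a b] at h
    nlinarith [h]
  have := discrim_le_zero key
  unfold discrim at this
  nlinarith [this]

lemma dot_diag_mulVec_aux {n : Type*} [Fintype n] [DecidableEq n] (d x z : n → ℝ) :
    x ⬝ᵥ (Matrix.diagonal d *ᵥ z) = (fun i => d i * x i) ⬝ᵥ z := by
  simp only [dotProduct, mulVec_diagonal]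
  exact Finset.sum_congr rfl fun i _ => by ring

lemma herm_smul_aux {n : Type*} [Fintype n] (r : ℝ) {M : Matrix n n ℝ} (h : M.IsHermitian) :
    (r • M).IsHermitian := by
  unfold Matrix.IsHermitian at *
  rw [conjTranspose_smul, star_trivial, h]

/-- The quadratic form of `Bmat`. -/
lemma quad_B_aux {m : ℕ} (V : Matrix (Fin (2 * m)) (Fin (2 * m)) ℝ) (w : Fin m → ℝ)
    (x : Fin (2 * m) → ℝ) :
    x ⬝ᵥ Bmat V w *ᵥ x =
      (∑ i, (1 - wExt w i) * x i ^ 2) +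
        (fun i => Real.sqrt (wExt w i) * x i) ⬝ᵥ (V + (1 / 2 : ℝ) • 1)⁻¹ *ᵥ
          (fun i => Real.sqrt (wExt w i) * x i) := by
  have hDx : Matrix.diagonal (fun i => Real.sqrt (wExt w i)) *ᵥ x
      = fun i => Real.sqrt (wExt w i) * x i := by
    ext i; exact mulVec_diagonal _ _ _
  rw [Bmat, add_mulVec, dotProduct_add, ← mulVec_mulVec, ← mulVec_mulVec, hDx,
    dot_diag_mulVec_aux]
  congr 1
  rw [sub_mulVec, one_mulVec, dotProduct_sub]
  simp only [dotProduct, mulVec_diagonal]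
  rw [← Finset.sum_sub_distrib]
  exact Finset.sum_congr rfl fun i _ => by ring

/-- If `y` vanishes on the first block, `yᵀ (V+I/2)⁻¹ y ≤ yᵀ y`. -/
lemma lower_A_aux {m : ℕ} {V : Matrix (Fin (2 * m)) (Fin (2 * m)) ℝ}
    (hVZ : (V + (1 / 2 : ℝ) • Zmat m).PosSemidef)
    (hVI : (V + (1 / 2 : ℝ) • 1).PosDef)
    (y : Fin (2 * m) → ℝ) (hy : ∀ i : Fin (2 * m), (i : ℕ) < m → y i = 0) :
    y ⬝ᵥ (V + (1 / 2 : ℝ) • 1)⁻¹ *ᵥ y ≤ y ⬝ᵥ y := by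
  set A := V + (1 / 2 : ℝ) • 1 with hAdef
  set u := A⁻¹ *ᵥ y with hu
  have hAu : A *ᵥ u = y := by
    rw [hu, mulVec_mulVec, Matrix.mul_nonsing_inv _ (isUnit_iff_ne_zero.mpr hVI.det_pos.ne'),
      one_mulVec]
  have hq : y ⬝ᵥ A⁻¹ *ᵥ y = y ⬝ᵥ u := rfl
  have hqu : u ⬝ᵥ A *ᵥ u = y ⬝ᵥ u := by rw [hAu, dotProduct_comm]
  have hZ : 0 ≤ u ⬝ᵥ (V + (1 / 2 : ℝ) • Zmat m) *ᵥ u := by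
    simpa [star_trivial] using hVZ.dotProduct_mulVec_nonneg u
  have hdiag : A = (V + (1 / 2 : ℝ) • Zmat m) +
      Matrix.diagonal (fun i : Fin (2 * m) => if (i : ℕ) < m then 0 else 1) := by
    have h1 : ((1 / 2 : ℝ)) • ((1 : Matrix (Fin (2 * m)) (Fin (2 * m)) ℝ) - Zmat m)
        = Matrix.diagonal (fun i : Fin (2 * m) => if (i : ℕ) < m then 0 else 1) := by
      ext i j
      by_cases hij : i = j
      · subst hij
        by_cases him : (i : ℕ) < m <;>
          simp [Zmat, him, Matrix.one_apply, Matrix.diagonal_apply_eq] <;> norm_num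
      · simp [Zmat, Matrix.one_apply, Matrix.diagonal, hij]
    rw [← h1, hAdef]
    rw [smul_sub]
    abel
  have hsplit : u ⬝ᵥ A *ᵥ u = u ⬝ᵥ (V + (1 / 2 : ℝ) • Zmat m) *ᵥ u +
      ∑ i : Fin (2 * m), (if (i : ℕ) < m then 0 else u i ^ 2) := by
    rw [hdiag, add_mulVec, dotProduct_add]
    congr 1
    simp only [dotProduct, mulVec_diagonal]
    exact Finset.sum_congr rfl fun i _ => by by_cases h : (i : ℕ) < m <;> simp [h] <;> ring
  have hmask : ∑ i : Fin (2 * m), (if (i : ℕ) < m then 0 else u i ^ 2) ≤ y ⬝ᵥ u := by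
    rw [← hqu, hsplit]; linarith
  have hyu : y ⬝ᵥ u = ∑ i : Fin (2 * m), y i * (if (i : ℕ) < m then 0 else u i) := by
    refine Finset.sum_congr rfl fun i _ => ?_
    by_cases h : (i : ℕ) < m
    · simp [h, hy i h]
    · simp [h]
  have hcs := Finset.sum_mul_sq_le_sq_mul_sq Finset.univ (fun i => y i)
    (fun i => if (i : ℕ) < m then 0 else u i)
  have hsq : ∑ i : Fin (2 * m), (fun i : Fin (2 * m) => if (i : ℕ) < m then 0 else u i) i ^ 2
      = ∑ i : Fin (2 * m), (if (i : ℕ) < m then 0 else u i ^ 2) := by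
    refine Finset.sum_congr rfl fun i _ => ?_
    by_cases h : (i : ℕ) < m <;> simp [h]
  have hs0 : 0 ≤ y ⬝ᵥ u := by
    rw [← hq]
    simpa [star_trivial] using hVI.inv.posSemidef.dotProduct_mulVec_nonneg y
  have hyy : 0 ≤ y ⬝ᵥ y := Finset.sum_nonneg fun i _ => mul_self_nonneg _
  have hkey : (y ⬝ᵥ u) ^ 2 ≤ (y ⬝ᵥ y) * (y ⬝ᵥ u) := by
    calc (y ⬝ᵥ u) ^ 2 = (∑ i : Fin (2 * m), y i * (if (i : ℕ) < m then 0 else u i)) ^ 2 := by rw [hyu]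
    _ ≤ (∑ i, y i ^ 2) * ∑ i : Fin (2 * m), (if (i : ℕ) < m then 0 else u i ^ 2) := by
        simpa [hsq] using hcs
    _ ≤ (y ⬝ᵥ y) * (y ⬝ᵥ u) := by
        have h1 : (∑ i, y i ^ 2) = y ⬝ᵥ y := by
          refine Finset.sum_congr rfl fun i _ => by ring
        rw [h1]
        exact mul_le_mul_of_nonneg_left hmask hyy
  rw [hq]
  rcases eq_or_lt_of_le hs0 with h | h
  · rw [← h]; exact hyy
  · have := (mul_le_mul_iff_left₀ h).mp (by nlinarith [hkey] : (y ⬝ᵥ u) * (y ⬝ᵥ u) ≤ (y ⬝ᵥ y) * (y ⬝ᵥ u))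
    exact this

/-- if `V` is real symmetric with `V + Z/2` positive semidefinite and `V + I/2`
positive definite, and `w_k ∈ [0,1]`, then `B = I − 𝒲 + 𝒲^{1/2}(V + I/2)⁻¹𝒲^{1/2}` is positive
definite and `V_𝒲 = −I/2 + B⁻¹` satisfies `V_𝒲 + Z/2` positive semidefinite. -/
theorem weight_update_valid_covariance {m : ℕ} (hm : 1 ≤ m)
    (V : Matrix (Fin (2 * m)) (Fin (2 * m)) ℝ) (hV : V.IsSymm)
    (hVZ : (V + (1 / 2 : ℝ) • Zmat m).PosSemidef)
    (hVI : (V + (1 / 2 : ℝ) • 1).PosDef)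
    (w : Fin m → ℝ) (hw0 : ∀ k, 0 ≤ w k) (hw1 : ∀ k, w k ≤ 1) :
    (Bmat V w).PosDef ∧
      ((-(1 / 2 : ℝ)) • 1 + (Bmat V w)⁻¹ + (1 / 2 : ℝ) • Zmat m).PosSemidef := by
  have hw' : ∀ i : Fin (2 * m), 0 ≤ wExt w i ∧ wExt w i ≤ 1 := by
    intro i
    unfold wExt
    split_ifs <;> exact ⟨hw0 _, hw1 _⟩
  have hAinv : (V + (1 / 2 : ℝ) • 1)⁻¹.PosDef := hVI.inv
  -- B is positive semidefinite (hermitian part)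
  have hBpsd : (Bmat V w).PosSemidef := by
    have h1 : (1 : Matrix (Fin (2 * m)) (Fin (2 * m)) ℝ) - Matrix.diagonal (wExt w)
        = Matrix.diagonal (fun i => 1 - wExt w i) := by
      rw [← Matrix.diagonal_one, ← Matrix.diagonal_sub]
    have hd : (0 : Fin (2 * m) → ℝ) ≤ fun i => 1 - wExt w i := by
      intro i
      have := (hw' i).2
      simp only [Pi.zero_apply]
      linarith
    have h2 : (Matrix.diagonal (fun i : Fin (2 * m) => 1 - wExt w i)).PosSemidef :=
      Matrix.PosSemidef.diagonal hd
    have h3 : (Matrix.diagonal (fun i => Real.sqrt (wExt w i)) * (V + (1 / 2 : ℝ) • 1)⁻¹ *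
        Matrix.diagonal (fun i => Real.sqrt (wExt w i))).PosSemidef := by
      have := hAinv.posSemidef.mul_mul_conjTranspose_same
        (Matrix.diagonal (fun i => Real.sqrt (wExt w i)))
      simpa [conjTranspose_eq_transpose_of_trivial, Matrix.diagonal_transpose] using this
    have := h2.add h3
    rw [← h1] at this
    exact this
  have hBposdef : (Bmat V w).PosDef := by
    refine PosDef.of_dotProduct_mulVec_pos hBpsd.1 fun x hx => ?_
    rw [star_trivial, quad_B_aux]
    have hS : 0 ≤ ∑ i, (1 - wExt w i) * x i ^ 2 :=
      Finset.sum_nonneg fun i _ => mul_nonneg (by linarith [(hw' i).2]) (sq_nonneg _)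
    have hQ : 0 ≤ (fun i => Real.sqrt (wExt w i) * x i) ⬝ᵥ (V + (1 / 2 : ℝ) • 1)⁻¹ *ᵥ
        (fun i => Real.sqrt (wExt w i) * x i) := by
      simpa [star_trivial] using hAinv.posSemidef.dotProduct_mulVec_nonneg (fun i => Real.sqrt (wExt w i) * x i)
    obtain ⟨i, hi⟩ := Function.ne_iff.mp hx
    have hi' : x i ≠ 0 := by simpa using hi
    by_cases hwi : wExt w i = 1
    · have hy : (fun j => Real.sqrt (wExt w j) * x j) ≠ 0 := by
        intro h
        apply hi
        have := congrFun h i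
        rw [hwi, Real.sqrt_one, one_mul] at this
        exact this
      have := hAinv.dotProduct_mulVec_pos hy
      rw [star_trivial] at this
      linarith
    · have hlt : wExt w i < 1 := lt_of_le_of_ne (hw' i).2 hwi
      have hx2 : 0 < x i ^ 2 := by positivity
      have hS' : 0 < ∑ j, (1 - wExt w j) * x j ^ 2 := by
        refine Finset.sum_pos' (fun j _ => mul_nonneg (by linarith [(hw' j).2]) (sq_nonneg _))
          ⟨i, Finset.mem_univ i, ?_⟩
        exact mul_pos (by linarith) hx2
      linarith
  refine ⟨hBposdef, ?_⟩
  -- second part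
  have hBinv : (Bmat V w)⁻¹.PosDef := hBposdef.inv
  refine PosSemidef.of_dotProduct_mulVec_nonneg ?_ ?_
  · -- hermitian
    exact ((herm_smul_aux _ isHermitian_one).add hBinv.1).add
      (herm_smul_aux _ (isHermitian_diagonal _))
  · intro x
    rw [star_trivial]
    -- the masked vector
    set p : Fin (2 * m) → ℝ := fun i => if (i : ℕ) < m then 0 else x i with hp
    set u := (Bmat V w)⁻¹ *ᵥ x with hu
    have hBu : Bmat V w *ᵥ u = x := by
      rw [hu, mulVec_mulVec,
        Matrix.mul_nonsing_inv _ (isUnit_iff_ne_zero.mpr hBposdef.det_pos.ne'), one_mulVec]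
    have hform : x ⬝ᵥ ((-(1 / 2 : ℝ)) • 1 + (Bmat V w)⁻¹ + (1 / 2 : ℝ) • Zmat m) *ᵥ x
        = x ⬝ᵥ (Bmat V w)⁻¹ *ᵥ x - p ⬝ᵥ p := by
      rw [add_mulVec, add_mulVec, dotProduct_add, dotProduct_add]
      have hz : x ⬝ᵥ ((-(1 / 2 : ℝ)) • 1) *ᵥ x + x ⬝ᵥ ((1 / 2 : ℝ) • Zmat m) *ᵥ x
          = - (p ⬝ᵥ p) := by
        rw [smul_mulVec, smul_mulVec, dotProduct_smul, dotProduct_smul,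
          one_mulVec]
        unfold Zmat
        rw [dot_diag_mulVec_aux]
        simp only [smul_eq_mul, dotProduct, Finset.mul_sum, hp, ← Finset.sum_neg_distrib]
        rw [← Finset.sum_add_distrib]
        refine Finset.sum_congr rfl fun i _ => ?_
        by_cases h : (i : ℕ) < m
        · simp [h]
        · simp [h]
          ring
      linarith [hz]
    rw [hform]
    have hq : x ⬝ᵥ (Bmat V w)⁻¹ *ᵥ x = u ⬝ᵥ Bmat V w *ᵥ u := by
      have h2 : u ⬝ᵥ Bmat V w *ᵥ u = x ⬝ᵥ u := by rw [hBu, dotProduct_comm]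
      rw [h2]
    have hpvanish : ∀ i : Fin (2 * m), (i : ℕ) < m → p i = 0 := fun i h => by simp [hp, h]
    have hpB : p ⬝ᵥ Bmat V w *ᵥ p ≤ p ⬝ᵥ p := by
      rw [quad_B_aux]
      have hyA := lower_A_aux hVZ hVI (fun i => Real.sqrt (wExt w i) * p i)
        (fun i h => by simp [hpvanish i h])
      have hyy : (fun i => Real.sqrt (wExt w i) * p i) ⬝ᵥ (fun i => Real.sqrt (wExt w i) * p i)
          = ∑ i : Fin (2 * m), wExt w i * p i ^ 2 := by
        simp only [dotProduct]
        refine Finset.sum_congr rfl fun i _ => ?_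
        rw [show (Real.sqrt (wExt w i) * p i) * (Real.sqrt (wExt w i) * p i)
          = (Real.sqrt (wExt w i)) ^ 2 * p i ^ 2 from by ring, Real.sq_sqrt (hw' i).1]
      have hsum : (∑ i, (1 - wExt w i) * p i ^ 2) + ∑ i : Fin (2 * m), wExt w i * p i ^ 2
          = p ⬝ᵥ p := by
        simp only [dotProduct]
        rw [← Finset.sum_add_distrib]
        exact Finset.sum_congr rfl fun i _ => by ring
      rw [hyy] at hyA
      linarith
    have hpx : p ⬝ᵥ x = p ⬝ᵥ p := by
      simp only [dotProduct]
      refine Finset.sum_congr rfl fun i _ => ?_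
      by_cases h : (i : ℕ) < m <;> simp [hp, h]
    have hcs := psd_cs_aux hBpsd p u
    have hpbu : p ⬝ᵥ Bmat V w *ᵥ u = p ⬝ᵥ p := by rw [hBu, hpx]
    rw [hpbu] at hcs
    have hub : 0 ≤ u ⬝ᵥ Bmat V w *ᵥ u := by simpa [star_trivial] using hBpsd.dotProduct_mulVec_nonneg u
    have hpp : 0 ≤ p ⬝ᵥ p := Finset.sum_nonneg fun i _ => mul_self_nonneg _
    have hpBp0 : 0 ≤ p ⬝ᵥ Bmat V w *ᵥ p := by simpa [star_trivial] using hBpsd.dotProduct_mulVec_nonneg p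
    rw [hq]
    rcases eq_or_lt_of_le hpp with h | h
    · nlinarith [hub]
    · nlinarith [hcs, mul_le_mul_of_nonneg_right hpB hub]
end
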